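/- Uniqueness via an energy argument on the strip: let g(Ω) ∈ (0,1), s ∈ (0,1), and p(r) = (1/(2π)) exp(-[Φ^{-1}(r)]^2). Suppose Z : [0, g(Ω)] × [0,∞) → R is smooth enough, satisfies -z^{2-1/s} ∂²Z/∂z² - p(r) ∂²Z/∂r² ≤ 0 a.e. on (0,g(Ω))×(0,∞), with boundary conditions Z(0,z) = 0, ∂Z/∂r(g(Ω), z) = 0 for all z ≥ 0, ∂Z/∂z(r,0) ≥ 0 for r ∈ (0,g(Ω)), and Z(r,z) → 0 as z → ∞ uniformly in r. Then Z ≤ 0 on [0,g(Ω)] × [0,∞). -/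

import Mathlib

open MeasureTheory Real ENNReal
open Set Filter Topology

/-- The Gaussian complementary distribution function
`Φ(λ) = (2π)^{-1/2} ∫_λ^∞ e^{-r²/2} dr`. -/
noncomputable def gaussPhi (lam : ℝ) : ℝ :=
  (1 / Real.sqrt (2 * π)) * ∫ r in Set.Ioi lam, Real.exp (-r ^ 2 / 2)

lemma gauss_integrable : Integrable (fun r : ℝ => Real.exp (-r ^ 2 / 2)) := by
  have h := integrable_exp_neg_mul_sq (b := (1/2 : ℝ)) (by norm_num)
  have : (fun r : ℝ => Real.exp (-r ^ 2 / 2)) = fun x : ℝ => Real.exp (-(1/2) * x ^ 2) := by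
    funext x; ring_nf
  rw [this]; exact h

lemma gaussPhi_anti : Antitone gaussPhi := by
  intro a b hab
  unfold gaussPhi
  have hC : (0:ℝ) ≤ 1 / Real.sqrt (2*π) := by positivity
  refine mul_le_mul_of_nonneg_left ?_ hC
  refine setIntegral_mono_set gauss_integrable.integrableOn
    (Eventually.of_forall fun x => (Real.exp_pos _).le) ?_
  exact HasSubset.Subset.eventuallyLE (Set.Ioi_subset_Ioi hab)

lemma gaussPhi_sub {a b : ℝ} (hab : a ≤ b) :
    gaussPhi a - gaussPhi b
      = (1 / Real.sqrt (2*π)) * ∫ r in Set.Ioc a b, Real.exp (-r ^ 2 / 2) := by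
  unfold gaussPhi
  rw [← mul_sub]
  congr 1
  have hsplit : (∫ r in Set.Ioc a b, Real.exp (-r ^ 2 / 2))
      + ∫ r in Set.Ioi b, Real.exp (-r ^ 2 / 2)
      = ∫ r in Set.Ioi a, Real.exp (-r ^ 2 / 2) := by
    rw [← setIntegral_union (Set.Ioc_disjoint_Ioi le_rfl) measurableSet_Ioi
      gauss_integrable.integrableOn gauss_integrable.integrableOn,
      Set.Ioc_union_Ioi_eq_Ioi hab]
  linarith

lemma gaussPhi_lipschitz {a b : ℝ} (hab : a ≤ b) :
    gaussPhi a - gaussPhi b ≤ (1 / Real.sqrt (2*π)) * (b - a) ∧ 0 ≤ gaussPhi a - gaussPhi b := by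
  constructor
  · rw [gaussPhi_sub hab]
    have hC : (0:ℝ) ≤ 1 / Real.sqrt (2*π) := by positivity
    refine mul_le_mul_of_nonneg_left ?_ hC
    have h1 : (∫ r in Set.Ioc a b, Real.exp (-r ^ 2 / 2)) ≤ ∫ _r in Set.Ioc a b, (1:ℝ) := by
      refine setIntegral_mono_on gauss_integrable.integrableOn
        (integrableOn_const measure_Ioc_lt_top.ne) measurableSet_Ioc ?_
      intro x _
      calc Real.exp (-x ^ 2 / 2) ≤ Real.exp 0 := by
            apply Real.exp_le_exp.mpr; nlinarith [sq_nonneg x]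
        _ = 1 := Real.exp_zero
    have h2 : (∫ _r in Set.Ioc a b, (1:ℝ)) = b - a := by
      simp [Real.volume_Ioc, ENNReal.toReal_ofReal (sub_nonneg.mpr hab), hab]
    linarith
  · linarith [gaussPhi_anti hab]

lemma gaussPhi_continuous : Continuous gaussPhi := by
  rw [Metric.continuous_iff]
  intro x ε hε
  set C := 1 / Real.sqrt (2*π) with hCdef
  refine ⟨ε / (C + 1), by positivity, fun y hy => ?_⟩
  have hC : (0:ℝ) < C := by positivity
  have key : ∀ u v : ℝ, u ≤ v → |gaussPhi v - gaussPhi u| ≤ C * (v - u) := by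
    intro u v huv
    obtain ⟨h1, h2⟩ := gaussPhi_lipschitz huv
    rw [abs_sub_comm, abs_of_nonneg h2]; exact h1
  have hd : |gaussPhi y - gaussPhi x| ≤ C * |y - x| := by
    rcases le_total x y with h | h
    · rw [abs_of_nonneg (sub_nonneg.mpr h)]; exact key x y h
    · rw [abs_sub_comm, abs_of_nonpos (sub_nonpos.mpr h), neg_sub]
      exact key y x h
  rw [Real.dist_eq] at *
  calc |gaussPhi y - gaussPhi x| ≤ C * |y - x| := hd
    _ < C * (ε / (C+1)) := by
        rcases eq_or_lt_of_le (abs_nonneg (y - x)) with h | h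
        · rw [← h, mul_zero]; positivity
        · exact mul_lt_mul_of_pos_left hy hC
    _ ≤ ε := by
        have h1 : C * (ε/(C+1)) = (C/(C+1)) * ε := by ring
        have h2 : C/(C+1) ≤ 1 := by rw [div_le_one (by positivity)]; linarith
        rw [h1]; nlinarith [hε.le]

lemma gauss_total : (∫ r : ℝ, Real.exp (-r ^ 2 / 2)) = Real.sqrt (2*π) := by
  have h := integral_gaussian (1/2 : ℝ)
  have he : (fun r : ℝ => Real.exp (-r ^ 2 / 2)) = fun x : ℝ => Real.exp (-(1/2) * x ^ 2) := by
    funext x; ring_nf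
  rw [he, h, show π/(1/2 : ℝ) = 2*π by ring]

lemma gaussPhi_split (lam : ℝ) :
    (∫ r in Set.Iic lam, Real.exp (-r ^ 2 / 2)) + ∫ r in Set.Ioi lam, Real.exp (-r ^ 2 / 2)
      = Real.sqrt (2*π) := by
  rw [← gauss_total]
  have := integral_add_compl (measurableSet_Iic (a := lam)) gauss_integrable
  rwa [compl_Iic] at this

lemma gaussPhi_neg (lam : ℝ) : gaussPhi (-lam) = 1 - gaussPhi lam := by
  have hsym : (∫ r in Set.Iic (-lam), Real.exp (-r ^ 2 / 2))
      = ∫ r in Set.Ioi lam, Real.exp (-r ^ 2 / 2) := by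
    have := integral_comp_neg_Iic (-lam) (fun r => Real.exp (-r ^ 2 / 2))
    simp only [neg_neg] at this
    rw [← this]
    congr 1; funext x; ring_nf
  have hsplit := gaussPhi_split (-lam)
  rw [hsym] at hsplit
  have hCs : (1 / Real.sqrt (2*π)) * Real.sqrt (2*π) = 1 := by
    field_simp
  unfold gaussPhi
  rw [show (∫ r in Set.Ioi (-lam), Real.exp (-r ^ 2 / 2))
      = Real.sqrt (2*π) - ∫ r in Set.Ioi lam, Real.exp (-r ^ 2 / 2) by linarith [hsplit],
    mul_sub, hCs]

lemma exists_gaussPhi_lt {r : ℝ} (hr : 0 < r) : ∃ lam : ℝ, gaussPhi lam < r := by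
  set f : ℝ → ℝ := fun x => Real.exp (-x ^ 2 / 2) with hf
  have hmono : Tendsto (fun n : ℕ => ∫ x in Set.Iic (n : ℝ), f x) atTop
      (𝓝 (∫ x in ⋃ n : ℕ, Set.Iic (n : ℝ), f x)) := by
    refine tendsto_setIntegral_of_monotone (fun n => measurableSet_Iic) ?_ ?_
    · intro m n hmn
      exact Set.Iic_subset_Iic.mpr (by exact_mod_cast hmn)
    · exact gauss_integrable.integrableOn
  have hUnion : (⋃ n : ℕ, Set.Iic (n : ℝ)) = Set.univ := by
    ext x; simp only [Set.mem_iUnion, Set.mem_Iic, Set.mem_univ, iff_true]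
    exact exists_nat_ge x
  rw [hUnion] at hmono
  simp only [setIntegral_univ] at hmono
  have hC : (0:ℝ) < 1 / Real.sqrt (2*π) := by positivity
  -- gaussPhi n = C * (total - ∫_{Iic n})
  have hphi : ∀ n : ℕ, gaussPhi n
      = (1 / Real.sqrt (2*π)) * (Real.sqrt (2*π) - ∫ x in Set.Iic (n:ℝ), f x) := by
    intro n
    unfold gaussPhi
    have := gaussPhi_split (n : ℝ)
    rw [show (∫ x in Set.Ioi (n:ℝ), Real.exp (-x ^ 2 / 2))
        = Real.sqrt (2*π) - ∫ x in Set.Iic (n:ℝ), f x by rw [hf]; linarith [this]]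
  have htend : Tendsto (fun n : ℕ => gaussPhi n) atTop (𝓝 0) := by
    have : Tendsto (fun n : ℕ =>
        (1 / Real.sqrt (2*π)) * (Real.sqrt (2*π) - ∫ x in Set.Iic (n:ℝ), f x)) atTop
        (𝓝 ((1 / Real.sqrt (2*π)) * (Real.sqrt (2*π) - ∫ x : ℝ, f x))) := by
      exact (tendsto_const_nhds.sub hmono).const_mul _
    rw [show (∫ x : ℝ, f x) = Real.sqrt (2*π) from gauss_total] at this
    simp only [sub_self, mul_zero] at this
    exact this.congr (fun n => (hphi n).symm)
  have := (htend.eventually (eventually_lt_nhds hr)).exists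
  obtain ⟨n, hn⟩ := this
  exact ⟨n, hn⟩

lemma gaussPhi_surj {r : ℝ} (h0 : 0 < r) (h1 : r < 1) : ∃ lam : ℝ, gaussPhi lam = r := by
  obtain ⟨b, hb⟩ := exists_gaussPhi_lt h0
  obtain ⟨a', ha'⟩ := exists_gaussPhi_lt (show (0:ℝ) < 1 - r by linarith)
  set a := -a' with hadef
  have ha : r < gaussPhi a := by rw [hadef, gaussPhi_neg]; linarith
  have hab : a ≤ b := by
    by_contra h
    push_neg at h
    have := gaussPhi_anti h.le
    linarith
  have := intermediate_value_Icc' hab gaussPhi_continuous.continuousOn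
    (show r ∈ Set.Icc (gaussPhi b) (gaussPhi a) from ⟨hb.le, ha.le⟩)
  obtain ⟨lam, _, hlam⟩ := this
  exact ⟨lam, hlam⟩

lemma pfun_lower_bound (pfun : ℝ → ℝ)
    (hpfun : ∀ r lam : ℝ, gaussPhi lam = r →
      pfun r = (1 / (2 * π)) * Real.exp (-(lam ^ 2)))
    {r1 r2 : ℝ} (h0 : 0 < r1) (h12 : r1 ≤ r2) (h1 : r2 < 1) :
    ∃ c > 0, ∀ r ∈ Set.Icc r1 r2, c ≤ pfun r := by
  obtain ⟨b, hb⟩ := exists_gaussPhi_lt h0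
  obtain ⟨a', ha'⟩ := exists_gaussPhi_lt (show (0:ℝ) < 1 - r2 by linarith)
  have ha : r2 < gaussPhi (-a') := by rw [gaussPhi_neg]; linarith
  set a := -a' with hadef
  refine ⟨(1 / (2 * π)) * Real.exp (-(max (a^2) (b^2))), by positivity, ?_⟩
  intro r hr
  obtain ⟨lam, hlam⟩ := gaussPhi_surj (lt_of_lt_of_le h0 hr.1) (lt_of_le_of_lt hr.2 h1)
  rw [hpfun r lam hlam]
  have hlb : lam ≤ b := by
    by_contra h
    push_neg at h
    have := gaussPhi_anti h.le
    rw [hlam] at this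
    linarith [hr.1]
  have hla : a ≤ lam := by
    by_contra h
    push_neg at h
    have := gaussPhi_anti h.le
    rw [hlam] at this
    linarith [hr.2]
  have hsq : lam ^ 2 ≤ max (a^2) (b^2) := by
    rcases le_total lam 0 with h | h
    · exact le_max_of_le_left (by nlinarith)
    · exact le_max_of_le_right (by nlinarith)
  have := Real.exp_le_exp.mpr (neg_le_neg hsq)
  have hC : (0:ℝ) < 1 / (2*π) := by positivity
  nlinarith

lemma deriv_nonneg_of_max_right {f : ℝ → ℝ} {a b : ℝ} (hab : a < b)
    (hd : DifferentiableAt ℝ f b) (hmax : ∀ x ∈ Set.Icc a b, f x ≤ f b) :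
    0 ≤ deriv f b := by
  have hs := hd.hasDerivAt
  rw [hasDerivAt_iff_tendsto_slope] at hs
  have hs' : Tendsto (slope f b) (𝓝[<] b) (𝓝 (deriv f b)) :=
    hs.mono_left (nhdsWithin_mono _ (fun x hx => ne_of_lt hx))
  refine ge_of_tendsto hs' ?_
  filter_upwards [Ioo_mem_nhdsLT_of_mem (show b ∈ Set.Ioc a b from ⟨hab, le_rfl⟩)]
    with x hx
  have h1 : f x ≤ f b := hmax x ⟨hx.1.le, hx.2.le⟩
  have h2 : x - b < 0 := sub_neg.mpr hx.2
  rw [slope_def_field]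
  rw [div_nonneg_iff]
  right
  constructor <;> linarith

lemma deriv_nonpos_of_max_left {f : ℝ → ℝ} {a b : ℝ} (hab : a < b)
    (hd : DifferentiableAt ℝ f a) (hmax : ∀ x ∈ Set.Icc a b, f x ≤ f a) :
    deriv f a ≤ 0 := by
  have hs := hd.hasDerivAt
  rw [hasDerivAt_iff_tendsto_slope] at hs
  have hs' : Tendsto (slope f a) (𝓝[>] a) (𝓝 (deriv f a)) :=
    hs.mono_left (nhdsWithin_mono _ (fun x hx => ne_of_gt hx))
  refine le_of_tendsto hs' ?_
  filter_upwards [Ioo_mem_nhdsGT_of_mem (show a ∈ Set.Ico a b from ⟨le_rfl, hab⟩)]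
    with x hx
  have h1 : f x ≤ f a := hmax x ⟨hx.1.le, hx.2.le⟩
  have h2 : 0 < x - a := sub_pos.mpr hx.1
  rw [slope_def_field]
  exact div_nonpos_of_nonpos_of_nonneg (by linarith) h2.le

lemma second_deriv_nonpos_of_isLocalMax {f : ℝ → ℝ} (hf : ContDiff ℝ 2 f) {x : ℝ}
    (h : IsLocalMax f x) : deriv (deriv f) x ≤ 0 := by
  by_contra hpos
  push_neg at hpos
  have hf' : ContDiff ℝ 1 (deriv f) := by
    have := (contDiff_succ_iff_deriv (n := 1)).mp (by exact_mod_cast hf)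
    exact this.2.2
  have hf'' : Continuous (deriv (deriv f)) := (contDiff_one_iff_deriv.mp hf').2
  have hU : IsOpen {y : ℝ | 0 < deriv (deriv f) y} := isOpen_lt continuous_const hf''
  obtain ⟨δ, hδ, hball⟩ := Metric.isOpen_iff.mp hU x hpos
  have hd0 : deriv f x = 0 := h.deriv_eq_zero
  have hmono' : StrictMonoOn (deriv f) (Set.Icc x (x + δ/2)) := by
    refine strictMonoOn_of_deriv_pos (convex_Icc _ _) (hf'.continuous.continuousOn) ?_
    intro y hy
    rw [interior_Icc] at hy
    refine hball ?_
    rw [Metric.mem_ball, Real.dist_eq, abs_of_pos (sub_pos.mpr hy.1)]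
    linarith [hy.2]
  have hmono : StrictMonoOn f (Set.Icc x (x + δ/2)) := by
    refine strictMonoOn_of_deriv_pos (convex_Icc _ _) (hf.continuous.continuousOn) ?_
    intro y hy
    rw [interior_Icc] at hy
    have := hmono' ⟨le_rfl, by linarith [hδ]⟩ ⟨hy.1.le, hy.2.le⟩ hy.1
    rwa [hd0] at this
  have hev : ∀ᶠ y in 𝓝[>] x, f y ≤ f x := h.filter_mono nhdsWithin_le_nhds
  have hev2 : ∀ᶠ y in 𝓝[>] x, y ∈ Set.Ioc x (x + δ/2) :=
    Ioc_mem_nhdsGT_of_mem ⟨le_rfl, by linarith⟩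
  obtain ⟨y, hy1, hy2⟩ := (hev.and hev2).exists
  have := hmono ⟨le_rfl, by linarith [hδ]⟩ ⟨hy2.1.le, hy2.2⟩ hy2.1
  linarith

lemma ae_to_all_of_continuousOn {f : ℝ → ℝ} {U : Set ℝ} (hU : IsOpen U)
    (hc : ContinuousOn f U) (hae : ∀ᵐ z ∂(volume.restrict U), f z ≤ 0) :
    ∀ z ∈ U, f z ≤ 0 := by
  by_contra hcon
  push_neg at hcon
  obtain ⟨z₀, hz₀U, hz₀⟩ := hcon
  have hca : ContinuousAt f z₀ := hc.continuousAt (hU.mem_nhds hz₀U)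
  have h1 : f ⁻¹' Set.Ioi 0 ∈ 𝓝 z₀ := hca (Ioi_mem_nhds hz₀)
  obtain ⟨ε, hε, hball⟩ := Metric.mem_nhds_iff.mp (inter_mem h1 (hU.mem_nhds hz₀U))
  have hm : volume ({z | ¬ f z ≤ 0} ∩ U) = 0 := by
    have := ae_iff.mp hae
    rwa [Measure.restrict_apply' hU.measurableSet] at this
  have hsub : Metric.ball z₀ ε ⊆ {z | ¬ f z ≤ 0} ∩ U := by
    intro y hy
    obtain ⟨hy1, hy2⟩ := hball hy
    exact ⟨by simp only [Set.mem_setOf_eq, not_le]; exact hy1, hy2⟩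
  have := measure_mono (μ := (volume : Measure ℝ)) hsub
  rw [hm] at this
  have hpos := Metric.measure_ball_pos volume z₀ hε
  exact absurd (le_antisymm this (zero_le)) (ne_of_gt hpos)

lemma hasDerivAt_sliceR {F : ℝ × ℝ → ℝ} {r z : ℝ} (hF : DifferentiableAt ℝ F (r, z)) :
    HasDerivAt (fun ρ => F (ρ, z)) (fderiv ℝ F (r, z) (1, 0)) r := by
  have h1 : HasDerivAt (fun ρ : ℝ => (ρ, z)) ((1 : ℝ), (0 : ℝ)) r :=
    (hasDerivAt_id r).prodMk (hasDerivAt_const r z)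
  exact hF.hasFDerivAt.comp_hasDerivAt r h1

lemma hasDerivAt_sliceZ {F : ℝ × ℝ → ℝ} {r z : ℝ} (hF : DifferentiableAt ℝ F (r, z)) :
    HasDerivAt (fun ζ => F (r, ζ)) (fderiv ℝ F (r, z) (0, 1)) z := by
  have h1 : HasDerivAt (fun ζ : ℝ => (r, ζ)) ((0 : ℝ), (1 : ℝ)) z :=
    (hasDerivAt_const z r).prodMk (hasDerivAt_id z)
  exact hF.hasFDerivAt.comp_hasDerivAt z h1

lemma contDiff_applied {F : ℝ × ℝ → ℝ} (hF : ContDiff ℝ 2 F) (v : ℝ × ℝ) :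
    ContDiff ℝ 1 (fun q => fderiv ℝ F q v) := by
  have h1 : ContDiff ℝ 1 (fderiv ℝ F) := hF.fderiv_right (by norm_num)
  exact (ContinuousLinearMap.apply ℝ ℝ v).contDiff.comp h1

lemma continuous_fderiv_applied {G : ℝ × ℝ → ℝ} (hG : ContDiff ℝ 1 G) (v : ℝ × ℝ) :
    Continuous (fun q => fderiv ℝ G q v) := by
  have h1 : Continuous (fderiv ℝ G) := hG.continuous_fderiv one_ne_zero
  exact (ContinuousLinearMap.apply ℝ ℝ v).continuous.comp h1

set_option maxHeartbeats 1600000 in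
/-- Uniqueness via an energy argument on the strip: if `Z(r,z)` is a (smooth enough)
subsolution of `-z^{2-1/s} Z_{zz} - p(r) Z_{rr} ≤ 0` on `(0,g)×(0,∞)`, where
`p(r) = (1/(2π)) exp(-[Φ⁻¹(r)]²)`, with `Z(0,z) = 0`, `Z_r(g,z) = 0`, `Z_z(r,0) ≥ 0`,
and `Z(r,z) → 0` as `z → ∞` uniformly in `r`, then `Z ≤ 0` on `[0,g]×[0,∞)`. -/
theorem strip_energy_subsolution_nonpos (g s : ℝ) (hg : 0 < g ∧ g < 1)
    (hs : 0 < s ∧ s < 1)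
    (pfun : ℝ → ℝ)
    (hpfun : ∀ r lam : ℝ, gaussPhi lam = r →
      pfun r = (1 / (2 * π)) * Real.exp (-(lam ^ 2)))
    (Z : ℝ → ℝ → ℝ) (hZ : ContDiff ℝ 2 (Function.uncurry Z))
    (hsub : ∀ᵐ q ∂(volume.restrict ((Set.Ioo (0 : ℝ) g) ×ˢ (Set.Ioi (0 : ℝ)))),
      -(q.2 ^ ((2 : ℝ) - 1 / s)) * deriv (deriv (Z q.1)) q.2
        - pfun q.1 * deriv (fun r => deriv (fun r' => Z r' q.2) r) q.1 ≤ 0)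
    (hbc0 : ∀ z : ℝ, 0 ≤ z → Z 0 z = 0)
    (hbcg : ∀ z : ℝ, 0 ≤ z → deriv (fun r => Z r z) g = 0)
    (hbcz : ∀ r ∈ Set.Ioo (0 : ℝ) g, 0 ≤ deriv (Z r) 0)
    (hdecay : ∀ ε > (0 : ℝ), ∃ z₀ : ℝ, ∀ z ≥ z₀, ∀ r ∈ Set.Icc (0 : ℝ) g, |Z r z| ≤ ε) :
    ∀ r ∈ Set.Icc (0 : ℝ) g, ∀ z : ℝ, 0 ≤ z → Z r z ≤ 0 := by
  obtain ⟨hg0, hg1⟩ := hg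
  by_contra hcon
  push_neg at hcon
  obtain ⟨r0, hr0, z0, hz0, hZpos⟩ := hcon
  set M0 := Z r0 z0 with hM0def
  obtain ⟨zd, hzd⟩ := hdecay (M0 / 2) (by linarith)
  set z₁ := max zd z0 + 1 with hz₁def
  have hz0z₁ : z0 < z₁ := by
    have := le_max_right zd z0; simp only [hz₁def]; linarith
  have hz₁pos : 0 < z₁ := lt_of_le_of_lt hz0 hz0z₁
  have hzdz₁ : zd ≤ z₁ := by
    have := le_max_left zd z0; simp only [hz₁def]; linarith
  have htop : ∀ r ∈ Set.Icc (0:ℝ) g, Z r z₁ ≤ M0 / 2 :=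
    fun r hr => (abs_le.mp (hzd z₁ hzdz₁ r hr)).2
  -- partial derivative machinery
  set F : ℝ × ℝ → ℝ := Function.uncurry Z with hFdef
  have hFd : Differentiable ℝ F := hZ.differentiable (by norm_num)
  set D10 : ℝ × ℝ → ℝ := fun q => fderiv ℝ F q (1, 0) with hD10def
  set D01 : ℝ × ℝ → ℝ := fun q => fderiv ℝ F q (0, 1) with hD01def
  have hD10c : ContDiff ℝ 1 D10 := contDiff_applied hZ _
  have hD01c : ContDiff ℝ 1 D01 := contDiff_applied hZ _
  set Q20 : ℝ × ℝ → ℝ := fun q => fderiv ℝ D10 q (1, 0) with hQ20def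
  set Q02 : ℝ × ℝ → ℝ := fun q => fderiv ℝ D01 q (0, 1) with hQ02def
  have hQ20c : Continuous Q20 := continuous_fderiv_applied hD10c _
  have hQ02c : Continuous Q02 := continuous_fderiv_applied hD01c _
  have hder10 : ∀ r z : ℝ, deriv (fun ρ => Z ρ z) r = D10 (r, z) :=
    fun r z => (hasDerivAt_sliceR (hFd (r, z))).deriv
  have hder01 : ∀ r z : ℝ, deriv (Z r) z = D01 (r, z) :=
    fun r z => (hasDerivAt_sliceZ (hFd (r, z))).deriv
  have hQ02eq : ∀ r z : ℝ, deriv (deriv (Z r)) z = Q02 (r, z) := by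
    intro r z
    have h1 : deriv (Z r) = fun ζ => D01 (r, ζ) := funext fun ζ => hder01 r ζ
    rw [h1]
    exact (hasDerivAt_sliceZ ((hD01c.differentiable one_ne_zero) (r, z))).deriv
  have hQ20eq : ∀ r z : ℝ, deriv (fun ρ => deriv (fun ρ' => Z ρ' z) ρ) r = Q20 (r, z) := by
    intro r z
    have h1 : (fun ρ => deriv (fun ρ' => Z ρ' z) ρ) = fun ρ => D10 (ρ, z) :=
      funext fun ρ => hder10 ρ z
    rw [h1]
    exact (hasDerivAt_sliceR ((hD10c.differentiable one_ne_zero) (r, z))).deriv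
  -- upgrade hsub to a.e.-r, all-z statement
  have hsub2 : ∀ᵐ q ∂((volume.restrict (Set.Ioo (0:ℝ) g)).prod (volume.restrict (Set.Ioi (0:ℝ)))),
      -(q.2 ^ ((2 : ℝ) - 1 / s)) * Q02 (q.1, q.2) - pfun q.1 * Q20 (q.1, q.2) ≤ 0 := by
    rw [Measure.prod_restrict, ← Measure.volume_eq_prod]
    refine hsub.mono fun q hq => ?_
    rwa [hQ02eq q.1 q.2, hQ20eq q.1 q.2] at hq
  have hfub := Measure.ae_ae_of_ae_prod hsub2
  have hgood : ∀ᵐ r ∂(volume.restrict (Set.Ioo (0:ℝ) g)), ∀ z ∈ Set.Ioi (0:ℝ),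
      -(z ^ ((2 : ℝ) - 1 / s)) * Q02 (r, z) - pfun r * Q20 (r, z) ≤ 0 := by
    refine hfub.mono fun r hr => ?_
    refine ae_to_all_of_continuousOn isOpen_Ioi ?_ hr
    have hc1 : ContinuousOn (fun z : ℝ => z ^ ((2:ℝ) - 1/s)) (Set.Ioi 0) := fun z hz =>
      (Real.continuousAt_rpow_const z _ (Or.inl (ne_of_gt hz))).continuousWithinAt
    have hc2 : Continuous fun z : ℝ => Q02 (r, z) :=
      hQ02c.comp (continuous_const.prodMk continuous_id)
    have hc3 : Continuous fun z : ℝ => Q20 (r, z) :=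
      hQ20c.comp (continuous_const.prodMk continuous_id)
    exact (hc1.neg.mul hc2.continuousOn).sub (continuousOn_const.mul hc3.continuousOn)
  -- perturbation
  set H := (z₁ + 1) + 3 * g ^ 2 with hHdef
  have hHpos : 0 < H := by nlinarith [sq_nonneg g]
  have hM0pos : 0 < M0 := hZpos
  set ε := M0 / (4 * (H + 1)) with hεdef
  have hεpos : 0 < ε := by
    apply div_pos hM0pos; nlinarith
  have hεH : ε * H ≤ M0 / 4 := by
    have h1 : ε * (H + 1) = M0 / 4 := by
      rw [hεdef]; field_simp
    nlinarith
  clear_value ε H z₁ M0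
  obtain ⟨W, hWdef⟩ : ∃ W : ℝ × ℝ → ℝ,
      W = fun q => Z q.1 q.2 - ε * ((z₁ + 1 - q.2) + (3 * g * q.1 - q.1 ^ 2)) := ⟨_, rfl⟩
  have hWcont : Continuous W := by
    rw [hWdef]
    have h1 : Continuous fun q : ℝ × ℝ => Z q.1 q.2 := hZ.continuous
    have h2 : Continuous fun q : ℝ × ℝ => (z₁ + 1 - q.2) + (3 * g * q.1 - q.1 ^ 2) :=
      (continuous_const.sub continuous_snd).add
        ((continuous_const.mul continuous_fst).sub (continuous_fst.pow 2))
    exact h1.sub (continuous_const.mul h2)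
  set K := Set.Icc (0:ℝ) g ×ˢ Set.Icc (0:ℝ) z₁ with hKdef
  have hKc : IsCompact K := isCompact_Icc.prod isCompact_Icc
  have hKne : ((0:ℝ), (0:ℝ)) ∈ K := ⟨⟨le_rfl, hg0.le⟩, ⟨le_rfl, hz₁pos.le⟩⟩
  obtain ⟨⟨r', z'⟩, hqK, hqmax'⟩ := hKc.exists_isMaxOn ⟨_, hKne⟩ hWcont.continuousOn
  have hqmax : ∀ q ∈ K, W q ≤ W (r', z') := fun q hq => hqmax' hq
  have hr'K : 0 ≤ r' ∧ r' ≤ g := Set.mem_Icc.mp (Set.mem_prod.mp hqK).1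
  have hz'K : 0 ≤ z' ∧ z' ≤ z₁ := Set.mem_Icc.mp (Set.mem_prod.mp hqK).2
  clear hqmax'
  -- basic bounds on the auxiliary function
  have hfun_nonneg : ∀ q ∈ K, 0 ≤ (z₁ + 1 - q.2) + (3 * g * q.1 - q.1 ^ 2) := by
    rintro ⟨r, z⟩ ⟨⟨h1, h2⟩, ⟨h3, h4⟩⟩
    simp only
    nlinarith
  have hfun_le : ∀ q ∈ K, (z₁ + 1 - q.2) + (3 * g * q.1 - q.1 ^ 2) ≤ H := by
    rintro ⟨r, z⟩ ⟨⟨h1, h2⟩, ⟨h3, h4⟩⟩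
    simp only [hHdef]
    nlinarith
  have hr0K : (r0, z0) ∈ K := Set.mem_prod.mpr ⟨hr0, Set.mem_Icc.mpr ⟨hz0, hz0z₁.le⟩⟩
  have hWlow : 3 * M0 / 4 ≤ W (r', z') := by
    have h1 : W (r0, z0) ≤ W (r', z') := hqmax _ hr0K
    have h2 : ε * ((z₁ + 1 - z0) + (3 * g * r0 - r0 ^ 2)) ≤ ε * H :=
      mul_le_mul_of_nonneg_left (hfun_le _ hr0K) hεpos.le
    have h3 : W (r0, z0) = Z r0 z0 - ε * ((z₁ + 1 - z0) + (3 * g * r0 - r0 ^ 2)) := by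
      rw [hWdef]
    rw [← hM0def] at h3
    linarith
  -- rule out r' = 0
  have hr'pos : 0 < r' := by
    rcases eq_or_lt_of_le hr'K.1 with h0 | h; swap; · exact h
    exfalso
    have hzero : Z r' z' = 0 := by rw [← h0]; exact hbc0 z' hz'K.1
    have hf : 0 ≤ (z₁ + 1 - z') + (3 * g * r' - r' ^ 2) := hfun_nonneg _ hqK
    have hmn : 0 ≤ ε * ((z₁ + 1 - z') + (3 * g * r' - r' ^ 2)) := mul_nonneg hεpos.le hf
    have hWv : W (r', z') = Z r' z' - ε * ((z₁ + 1 - z') + (3 * g * r' - r' ^ 2)) := by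
      rw [hWdef]
    rw [hWv, hzero] at hWlow
    linarith
  -- rule out z' = z₁
  have hz'lt : z' < z₁ := by
    rcases lt_or_eq_of_le hz'K.2 with h | h0; · exact h
    exfalso
    have htop' : Z r' z' ≤ M0 / 2 := by rw [h0]; exact htop r' ⟨hr'K.1, hr'K.2⟩
    have hf : 0 ≤ (z₁ + 1 - z') + (3 * g * r' - r' ^ 2) := hfun_nonneg _ hqK
    have hmn : 0 ≤ ε * ((z₁ + 1 - z') + (3 * g * r' - r' ^ 2)) := mul_nonneg hεpos.le hf
    have hWv : W (r', z') = Z r' z' - ε * ((z₁ + 1 - z') + (3 * g * r' - r' ^ 2)) := by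
      rw [hWdef]
    rw [hWv] at hWlow
    linarith
  -- rule out r' = g
  have hr'lt : r' < g := by
    rcases lt_or_eq_of_le hr'K.2 with h | h0; · exact h
    exfalso
    have hZr : HasDerivAt (fun ρ => Z ρ z') (D10 (g, z')) g := by
      rw [← h0]; exact hasDerivAt_sliceR (hFd (r', z'))
    have hpoly : HasDerivAt (fun x : ℝ => (z₁ + 1 - z') + (3 * g * x - x ^ 2)) (3 * g - 2 * g) g := by
      have h1 : HasDerivAt (fun x : ℝ => 3 * g * x) (3 * g) g := by
        simpa using (hasDerivAt_id g).const_mul (3 * g)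
      have h2 : HasDerivAt (fun x : ℝ => x ^ 2) (2 * g) g := by
        simpa using hasDerivAt_pow 2 g
      exact ((hasDerivAt_const g (z₁ + 1 - z')).add (h1.sub h2)).congr_deriv (by ring)
    have hW' : HasDerivAt (fun ρ => W (ρ, z')) (D10 (g, z') - ε * (3 * g - 2 * g)) g := by
      simp only [hWdef]
      exact hZr.sub (hpoly.const_mul ε)
    have hmax' : ∀ x ∈ Set.Icc 0 g, (fun ρ => W (ρ, z')) x ≤ (fun ρ => W (ρ, z')) g := by
      intro x hx
      show W (x, z') ≤ W (g, z')
      rw [← h0]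
      exact hqmax _ (Set.mem_prod.mpr ⟨hx, Set.mem_Icc.mpr hz'K⟩)
    have hge := deriv_nonneg_of_max_right hg0 hW'.differentiableAt hmax'
    rw [hW'.deriv] at hge
    have hD10z : D10 (g, z') = 0 := by
      rw [← hder10 g z']
      exact hbcg z' hz'K.1
    rw [hD10z] at hge
    have hεg : (0:ℝ) < ε * g := mul_pos hεpos hg0
    have : ε * (3 * g - 2 * g) = ε * g := by ring
    linarith [hge, this]
  -- rule out z' = 0
  have hz'pos : 0 < z' := by
    rcases lt_or_eq_of_le hz'K.1 with h | h0; · exact h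
    exfalso
    have hZz : HasDerivAt (fun ζ => Z r' ζ) (D01 (r', 0)) 0 := by
      rw [h0]; exact hasDerivAt_sliceZ (hFd (r', z'))
    have hpoly : HasDerivAt
        (fun ζ : ℝ => (z₁ + 1 - ζ) + (3 * g * r' - r' ^ 2)) (-1 : ℝ) 0 := by
      have h1 : HasDerivAt (fun ζ : ℝ => z₁ + 1 - ζ) (-1 : ℝ) 0 := by
        exact ((hasDerivAt_const (0:ℝ) (z₁ + 1)).sub (hasDerivAt_id (0:ℝ))).congr_deriv (by ring)
      exact (h1.add (hasDerivAt_const (0:ℝ) (3 * g * r' - r' ^ 2))).congr_deriv (by ring)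
    have hW' : HasDerivAt (fun ζ => W (r', ζ)) (D01 (r', 0) - ε * (-1)) 0 := by
      simp only [hWdef]
      exact hZz.sub (hpoly.const_mul ε)
    have hmax' : ∀ x ∈ Set.Icc 0 z₁, (fun ζ => W (r', ζ)) x ≤ (fun ζ => W (r', ζ)) 0 := by
      intro x hx
      show W (r', x) ≤ W (r', 0)
      rw [h0]
      exact hqmax _ (Set.mem_prod.mpr ⟨Set.mem_Icc.mpr hr'K, hx⟩)
    have hle := deriv_nonpos_of_max_left hz₁pos hW'.differentiableAt hmax'
    rw [hW'.deriv] at hle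
    have hD01z : 0 ≤ D01 (r', 0) := by
      rw [← hder01 r' 0]
      exact hbcz r' ⟨hr'pos, hr'lt⟩
    linarith
  -- interior case
  -- second derivative in r
  have hfrD1 : ∀ ρ : ℝ, HasDerivAt (fun x => W (x, z'))
      (D10 (ρ, z') - ε * (3 * g - 2 * ρ)) ρ := by
    intro ρ
    have hpoly : HasDerivAt (fun x : ℝ => (z₁ + 1 - z') + (3 * g * x - x ^ 2))
        (3 * g - 2 * ρ) ρ := by
      have h1 : HasDerivAt (fun x : ℝ => 3 * g * x) (3 * g) ρ := by
        simpa using (hasDerivAt_id ρ).const_mul (3 * g)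
      have h2 : HasDerivAt (fun x : ℝ => x ^ 2) (2 * ρ) ρ := by
        simpa using hasDerivAt_pow 2 ρ
      exact ((hasDerivAt_const ρ (z₁ + 1 - z')).add (h1.sub h2)).congr_deriv (by ring)
    simp only [hWdef]
    exact (hasDerivAt_sliceR (hFd (ρ, z'))).sub (hpoly.const_mul ε)
  have hfr2 : deriv (deriv (fun x => W (x, z'))) r' = Q20 (r', z') - ε * (-2) := by
    rw [show deriv (fun x => W (x, z'))
        = fun ρ => D10 (ρ, z') - ε * (3 * g - 2 * ρ) from funext fun ρ => (hfrD1 ρ).deriv]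
    have hD : HasDerivAt (fun ρ => D10 (ρ, z')) (Q20 (r', z')) r' :=
      hasDerivAt_sliceR ((hD10c.differentiable one_ne_zero) (r', z'))
    have hpoly : HasDerivAt (fun ρ : ℝ => 3 * g - 2 * ρ) (-2 : ℝ) r' := by
      have h1 : HasDerivAt (fun ρ : ℝ => 2 * ρ) (2 : ℝ) r' := by
        simpa using (hasDerivAt_id r').const_mul (2:ℝ)
      exact ((hasDerivAt_const r' (3 * g)).sub h1).congr_deriv (by ring)
    exact (hD.sub (hpoly.const_mul ε)).deriv
  have hfzD1 : ∀ ζ : ℝ, HasDerivAt (fun x => W (r', x))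
      (D01 (r', ζ) - ε * (-1)) ζ := by
    intro ζ
    have hpoly : HasDerivAt (fun x : ℝ => (z₁ + 1 - x) + (3 * g * r' - r' ^ 2)) (-1 : ℝ) ζ := by
      have h1 : HasDerivAt (fun x : ℝ => z₁ + 1 - x) (-1 : ℝ) ζ := by
        exact ((hasDerivAt_const ζ (z₁ + 1)).sub (hasDerivAt_id ζ)).congr_deriv (by ring)
      exact (h1.add (hasDerivAt_const ζ (3 * g * r' - r' ^ 2))).congr_deriv (by ring)
    simp only [hWdef]
    exact (hasDerivAt_sliceZ (hFd (r', ζ))).sub (hpoly.const_mul ε)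
  have hfz2 : deriv (deriv (fun x => W (r', x))) z' = Q02 (r', z') := by
    rw [show deriv (fun x => W (r', x))
        = fun ζ => D01 (r', ζ) - ε * (-1) from funext fun ζ => (hfzD1 ζ).deriv]
    have hD : HasDerivAt (fun ζ => D01 (r', ζ)) (Q02 (r', z')) z' :=
      hasDerivAt_sliceZ ((hD01c.differentiable one_ne_zero) (r', z'))
    have := (hD.sub (hasDerivAt_const z' (ε * (-1)))).deriv
    exact this.trans (sub_zero _)
  -- smoothness of slices
  have hfrC : ContDiff ℝ 2 (fun x => W (x, z')) := by
    simp only [hWdef]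
    have h1 : ContDiff ℝ 2 (fun x : ℝ => Z x z') :=
      hZ.comp (contDiff_id.prodMk contDiff_const)
    have h2 : ContDiff ℝ 2 (fun x : ℝ => ε * ((z₁ + 1 - z') + (3 * g * x - x ^ 2))) := by
      apply ContDiff.mul contDiff_const
      exact contDiff_const.add ((contDiff_const.mul contDiff_id).sub (contDiff_id.pow 2))
    exact h1.sub h2
  have hfzC : ContDiff ℝ 2 (fun x => W (r', x)) := by
    simp only [hWdef]
    have h1 : ContDiff ℝ 2 (fun x : ℝ => Z r' x) :=
      hZ.comp (contDiff_const.prodMk contDiff_id)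
    have h2 : ContDiff ℝ 2 (fun x : ℝ => ε * ((z₁ + 1 - x) + (3 * g * r' - r' ^ 2))) := by
      apply ContDiff.mul contDiff_const
      exact (contDiff_const.sub contDiff_id).add contDiff_const
    exact h1.sub h2
  -- local max in each direction
  have hlocr : IsLocalMax (fun x => W (x, z')) r' := by
    filter_upwards [Icc_mem_nhds hr'pos hr'lt] with x hx
    exact hqmax _ (Set.mem_prod.mpr ⟨hx, Set.mem_Icc.mpr hz'K⟩)
  have hlocz : IsLocalMax (fun x => W (r', x)) z' := by
    filter_upwards [Icc_mem_nhds hz'pos hz'lt] with x hx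
    exact hqmax _ (Set.mem_prod.mpr ⟨Set.mem_Icc.mpr hr'K, hx⟩)
  have hQ20neg : Q20 (r', z') ≤ -(2 * ε) := by
    have := second_deriv_nonpos_of_isLocalMax hfrC hlocr
    rw [hfr2] at this
    linarith
  have hQ02nonpos : Q02 (r', z') ≤ 0 := by
    have := second_deriv_nonpos_of_isLocalMax hfzC hlocz
    rwa [hfz2] at this
  -- pfun lower bound near r'
  obtain ⟨c, hc, hcbound⟩ := pfun_lower_bound pfun hpfun
    (show (0:ℝ) < r' / 2 by linarith)
    (show r' / 2 ≤ (r' + g) / 2 by linarith)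
    (show (r' + g) / 2 < 1 by linarith)
  -- open set where the inequalities persist
  set S := {ρ : ℝ | Q20 (ρ, z') < -ε ∧ z' ^ ((2:ℝ) - 1/s) * Q02 (ρ, z') < c * ε / 2} with hSdef
  have hScont1 : Continuous fun ρ : ℝ => Q20 (ρ, z') :=
    hQ20c.comp (continuous_id.prodMk continuous_const)
  have hScont2 : Continuous fun ρ : ℝ => z' ^ ((2:ℝ) - 1/s) * Q02 (ρ, z') :=
    continuous_const.mul (hQ02c.comp (continuous_id.prodMk continuous_const))
  have hSopen : IsOpen S :=
    (isOpen_lt hScont1 continuous_const).inter (isOpen_lt hScont2 continuous_const)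
  have hr'S : r' ∈ S := by
    constructor
    · linarith
    · have h1 : (0:ℝ) ≤ z' ^ ((2:ℝ) - 1/s) := Real.rpow_nonneg hz'pos.le _
      have h2 : z' ^ ((2:ℝ) - 1/s) * Q02 (r', z') ≤ 0 :=
        mul_nonpos_of_nonneg_of_nonpos h1 hQ02nonpos
      have : (0:ℝ) < c * ε / 2 := by positivity
      linarith
  obtain ⟨δ, hδ, hball⟩ := Metric.isOpen_iff.mp hSopen r' hr'S
  set δ' := min δ (min (r' / 2) ((g - r') / 2)) with hδ'def
  have hδ'pos : 0 < δ' := by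
    apply lt_min hδ
    apply lt_min <;> linarith
  have hδ'δ : δ' ≤ δ := min_le_left _ _
  have hδ'r : δ' ≤ r' / 2 := le_trans (min_le_right _ _) (min_le_left _ _)
  have hδ'g : δ' ≤ (g - r') / 2 := le_trans (min_le_right _ _) (min_le_right _ _)
  clear_value δ'
  set I := Set.Ioo (r' - δ') (r' + δ') with hIdef
  -- a good point in I
  have hbad : volume ({ρ : ℝ | ¬ (∀ z ∈ Set.Ioi (0:ℝ),
      -(z ^ ((2 : ℝ) - 1 / s)) * Q02 (ρ, z) - pfun ρ * Q20 (ρ, z) ≤ 0)} ∩ Set.Ioo 0 g) = 0 := by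
    have := ae_iff.mp hgood
    rwa [Measure.restrict_apply' measurableSet_Ioo] at this
  have hIsub : I ⊆ Set.Ioo (0:ℝ) g := by
    intro x hx
    obtain ⟨h1, h2⟩ := hx
    constructor <;> linarith
  have hexists : ∃ ρ ∈ I, ∀ z ∈ Set.Ioi (0:ℝ),
      -(z ^ ((2 : ℝ) - 1 / s)) * Q02 (ρ, z) - pfun ρ * Q20 (ρ, z) ≤ 0 := by
    by_contra hno
    push_neg at hno
    have hsub' : I ⊆ {ρ : ℝ | ¬ (∀ z ∈ Set.Ioi (0:ℝ),
        -(z ^ ((2 : ℝ) - 1 / s)) * Q02 (ρ, z) - pfun ρ * Q20 (ρ, z) ≤ 0)} ∩ Set.Ioo 0 g := by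
      intro x hx
      refine ⟨?_, hIsub hx⟩
      simp only [Set.mem_setOf_eq]
      push_neg
      exact hno x hx
    have hle := measure_mono (μ := (volume : Measure ℝ)) hsub'
    rw [hbad] at hle
    have : volume I = ENNReal.ofReal (2 * δ') := by
      rw [hIdef, Real.volume_Ioo]; ring_nf
    rw [this] at hle
    have : (0:ℝ≥0∞) < ENNReal.ofReal (2 * δ') := ENNReal.ofReal_pos.mpr (by linarith)
    exact absurd (le_antisymm hle (zero_le)) (ne_of_gt this)
  obtain ⟨ρ, hρI, hρP⟩ := hexists
  have hρS : ρ ∈ S := by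
    apply hball
    rw [Metric.mem_ball, Real.dist_eq]
    obtain ⟨h1, h2⟩ := hρI
    rw [abs_lt]
    constructor <;> linarith
  have hρIcc : ρ ∈ Set.Icc (r'/2) ((r' + g)/2) := by
    obtain ⟨h1, h2⟩ := hρI
    constructor <;> linarith
  have hρc : c ≤ pfun ρ := hcbound ρ hρIcc
  have hineq := hρP z' (Set.mem_Ioi.mpr hz'pos)
  obtain ⟨hS1, hS2⟩ := hρS
  -- final contradiction
  have hp1 : pfun ρ * Q20 (ρ, z') ≤ pfun ρ * (-ε) :=
    mul_le_mul_of_nonneg_left hS1.le (le_trans hc.le hρc)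
  have hp2 : pfun ρ * (-ε) ≤ c * (-ε) :=
    mul_le_mul_of_nonpos_right hρc (neg_nonpos.mpr hεpos.le)
  have hcε : 0 < c * ε := mul_pos hc hεpos
  linarith
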